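/- AUROC upper bound via total variation: let M and H be probability measures on a measurable space, let X ~ M and Y ~ H be independent, and let f be any measurable real-valued score function. Define AUROC(f) = P(f(X) > f(Y)) + (1/2)·P(f(X) = f(Y)). Then AUROC(f) ≤ 1/2 + TV(M, H) − TV(M, H)²/2. -/

import Mathlib

open MeasureTheory

/-- Total variation distance between two measures: the supremum over measurable sets `A`
of `|P(A) − Q(A)|`. -/
noncomputable def tvDist {X : Type*} [MeasurableSpace X] (P Q : Measure X) : ℝ :=
  ⨆ A : {A : Set X // MeasurableSet A}, |(P A.1).toReal - (Q A.1).toReal|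

/-- The AUROC of a score function `f` for distinguishing `M` from `H`: the probability that
an independent sample from `M` receives a strictly higher score than a sample from `H`,
plus half the probability of a tie. -/
noncomputable def auroc {X : Type*} [MeasurableSpace X] (M H : Measure X) (f : X → ℝ) : ℝ :=
  ((M.prod H) {p | f p.1 > f p.2}).toReal
    + (1 / 2) * ((M.prod H) {p | f p.1 = f p.2}).toReal

namespace AurocAux

variable {X : Type*} [MeasurableSpace X] {f : X → ℝ}

lemma measurableSet_gt (hf : Measurable f) :
    MeasurableSet {p : X × X | f p.1 > f p.2} :=
  measurableSet_lt (hf.comp measurable_snd) (hf.comp measurable_fst)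

lemma measurableSet_lt' (hf : Measurable f) :
    MeasurableSet {p : X × X | f p.1 < f p.2} :=
  measurableSet_lt (hf.comp measurable_fst) (hf.comp measurable_snd)

lemma measurableSet_eq' (hf : Measurable f) :
    MeasurableSet {p : X × X | f p.1 = f p.2} :=
  measurableSet_eq_fun (hf.comp measurable_fst) (hf.comp measurable_snd)

lemma S_add_left (P₁ P₂ Q : Measure X) [IsFiniteMeasure P₁] [IsFiniteMeasure P₂]
    [IsFiniteMeasure Q] :
    auroc (P₁ + P₂) Q f = auroc P₁ Q f + auroc P₂ Q f := by
  simp only [auroc, Measure.add_prod, Measure.add_apply,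
    ENNReal.toReal_add (measure_ne_top _ _) (measure_ne_top _ _)]
  ring

lemma S_add_right (P Q₁ Q₂ : Measure X) [IsFiniteMeasure P] [IsFiniteMeasure Q₁]
    [IsFiniteMeasure Q₂] :
    auroc P (Q₁ + Q₂) f = auroc P Q₁ f + auroc P Q₂ f := by
  simp only [auroc, Measure.prod_add, Measure.add_apply,
    ENNReal.toReal_add (measure_ne_top _ _) (measure_ne_top _ _)]
  ring

lemma S_le_mul (hf : Measurable f) (P Q : Measure X) [IsFiniteMeasure P] [IsFiniteMeasure Q] :
    auroc P Q f ≤ (P Set.univ).toReal * (Q Set.univ).toReal := by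
  have hdisj : Disjoint {p : X × X | f p.1 > f p.2} {p : X × X | f p.1 = f p.2} := by
    rw [Set.disjoint_left]
    intro p hp hp'
    exact absurd hp' (ne_of_gt hp)
  have h1 : (P.prod Q) {p | f p.1 > f p.2} + (P.prod Q) {p | f p.1 = f p.2}
      ≤ (P.prod Q) Set.univ := by
    rw [← measure_union hdisj (measurableSet_eq' hf)]
    exact measure_mono (Set.subset_univ _)
  have h2 : ((P.prod Q) {p | f p.1 > f p.2}).toReal + ((P.prod Q) {p | f p.1 = f p.2}).toReal
      ≤ ((P.prod Q) Set.univ).toReal := by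
    rw [← ENNReal.toReal_add (measure_ne_top _ _) (measure_ne_top _ _)]
    exact ENNReal.toReal_mono (measure_ne_top _ _) h1
  have h3 : ((P.prod Q) Set.univ).toReal = (P Set.univ).toReal * (Q Set.univ).toReal := by
    rw [← Set.univ_prod_univ, Measure.prod_prod, ENNReal.toReal_mul]
  have h4 : (0:ℝ) ≤ ((P.prod Q) {p | f p.1 = f p.2}).toReal := ENNReal.toReal_nonneg
  simp only [auroc]
  linarith

lemma S_self (hf : Measurable f) (μ : Measure X) [IsFiniteMeasure μ] :
    auroc μ μ f = (μ Set.univ).toReal ^ 2 / 2 := by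
  set A := {p : X × X | f p.1 > f p.2} with hA
  set A' := {p : X × X | f p.1 < f p.2} with hA'
  set E := {p : X × X | f p.1 = f p.2} with hE
  have hswap : (μ.prod μ) A = (μ.prod μ) A' := by
    conv_lhs => rw [← Measure.prod_swap]
    rw [Measure.map_apply measurable_swap (measurableSet_gt hf)]
    congr 1
  have hd1 : Disjoint A A' := by
    rw [Set.disjoint_left]
    intro p hp hp'
    have hp2 : f p.2 < f p.1 := hp
    have hp3 : f p.1 < f p.2 := hp'
    exact lt_asymm hp2 hp3
  have hd2 : Disjoint (A ∪ A') E := by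
    rw [Set.disjoint_left]
    rintro p (hp | hp) hp'
    · exact absurd hp' (ne_of_gt hp)
    · exact absurd hp' (ne_of_lt hp)
  have hunion : (A ∪ A') ∪ E = Set.univ := by
    ext p
    simp only [Set.mem_union, Set.mem_univ, iff_true, hA, hA', hE, Set.mem_setOf_eq]
    rcases lt_trichotomy (f p.1) (f p.2) with h | h | h
    · exact Or.inl (Or.inr h)
    · exact Or.inr h
    · exact Or.inl (Or.inl h)
  have hpart : (μ.prod μ) A + (μ.prod μ) A' + (μ.prod μ) E = (μ.prod μ) Set.univ := by
    rw [← measure_union hd1 (measurableSet_lt' hf), ← measure_union hd2 (measurableSet_eq' hf),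
      hunion]
  have huniv : ((μ.prod μ) Set.univ).toReal = (μ Set.univ).toReal ^ 2 := by
    rw [← Set.univ_prod_univ, Measure.prod_prod, ENNReal.toReal_mul, sq]
  have hr : ((μ.prod μ) A).toReal + ((μ.prod μ) A').toReal + ((μ.prod μ) E).toReal
      = (μ Set.univ).toReal ^ 2 := by
    rw [← ENNReal.toReal_add (measure_ne_top _ _) (measure_ne_top _ _),
      ← ENNReal.toReal_add (by exact ENNReal.add_ne_top.mpr ⟨measure_ne_top _ _, measure_ne_top _ _⟩)
        (measure_ne_top _ _), hpart, huniv]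
  have hsr : ((μ.prod μ) A).toReal = ((μ.prod μ) A').toReal := by rw [hswap]
  simp only [auroc]
  show ((μ.prod μ) A).toReal + 1 / 2 * ((μ.prod μ) E).toReal = (μ Set.univ).toReal ^ 2 / 2
  linarith

end AurocAux

/-- **AUROC upper bound via total variation.** Let `M` and `H` be probability measures,
let `X ~ M` and `Y ~ H` be independent, and let `f` be any measurable real-valued score
function.  Then `AUROC(f) ≤ 1/2 + TV(M, H) − TV(M, H)²/2`. -/
theorem auroc_le_half_add_tv_sub_tv_sq {X : Type*} [MeasurableSpace X]
    (M H : Measure X) [IsProbabilityMeasure M] [IsProbabilityMeasure H]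
    (f : X → ℝ) (hf : Measurable f) :
    auroc M H f ≤ 1 / 2 + tvDist M H - tvDist M H ^ 2 / 2 := by
  classical
  obtain ⟨s, hs, hs1, hs2⟩ := hahn_decomposition (μ := M) (ν := H)
  set μ : Measure X := M.restrict sᶜ + H.restrict s with hμdef
  haveI : IsFiniteMeasure μ := by rw [hμdef]; infer_instance
  -- μ ≤ M and μ ≤ H
  have hμM : μ ≤ M := by
    rw [Measure.le_iff]
    intro A hA
    have h1 : H (A ∩ s) ≤ M (A ∩ s) := hs1 _ (hA.inter hs) Set.inter_subset_right
    have h2 : μ A = M (A ∩ sᶜ) + H (A ∩ s) := by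
      rw [hμdef, Measure.add_apply, Measure.restrict_apply hA, Measure.restrict_apply hA]
    have h3 : M (A ∩ sᶜ) + M (A ∩ s) = M A := by
      rw [← Set.diff_eq, add_comm]
      exact measure_inter_add_diff A hs
    calc μ A = M (A ∩ sᶜ) + H (A ∩ s) := h2
      _ ≤ M (A ∩ sᶜ) + M (A ∩ s) := add_le_add_right h1 _
      _ = M A := h3
  have hμH : μ ≤ H := by
    rw [Measure.le_iff]
    intro A hA
    have h1 : M (A ∩ sᶜ) ≤ H (A ∩ sᶜ) := hs2 _ (hA.inter hs.compl) Set.inter_subset_right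
    have h2 : μ A = M (A ∩ sᶜ) + H (A ∩ s) := by
      rw [hμdef, Measure.add_apply, Measure.restrict_apply hA, Measure.restrict_apply hA]
    have h3 : H (A ∩ sᶜ) + H (A ∩ s) = H A := by
      rw [← Set.diff_eq, add_comm]
      exact measure_inter_add_diff A hs
    calc μ A = M (A ∩ sᶜ) + H (A ∩ s) := h2
      _ ≤ H (A ∩ sᶜ) + H (A ∩ s) := add_le_add_left h1 _
      _ = H A := h3
  set M' : Measure X := M - μ with hM'def
  set H' : Measure X := H - μ with hH'def
  haveI : IsFiniteMeasure M' := isFiniteMeasure_of_le M (hM'def ▸ Measure.sub_le)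
  haveI : IsFiniteMeasure H' := isFiniteMeasure_of_le H (hH'def ▸ Measure.sub_le)
  have hM : M' + μ = M := Measure.sub_add_cancel_of_le hμM
  have hH : H' + μ = H := Measure.sub_add_cancel_of_le hμH
  set m : ℝ := (μ Set.univ).toReal with hm
  set d : ℝ := (M' Set.univ).toReal with hd
  have hm0 : 0 ≤ m := ENNReal.toReal_nonneg
  have hd0 : 0 ≤ d := ENNReal.toReal_nonneg
  have hdm : d + m = 1 := by
    have h := congrArg (fun ν : Measure X => (ν Set.univ).toReal) hM
    simpa [Measure.add_apply, ENNReal.toReal_add (measure_ne_top _ _) (measure_ne_top _ _)]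
      using h
  have hH'm : (H' Set.univ).toReal = d := by
    have h := congrArg (fun ν : Measure X => (ν Set.univ).toReal) hH
    simp only [Measure.add_apply, measure_univ, ENNReal.toReal_one,
      ENNReal.toReal_add (measure_ne_top _ _) (measure_ne_top _ _)] at h
    linarith
  -- identify d with the gap on the Hahn set
  have hMs1 : (M s).toReal + (M sᶜ).toReal = 1 := by
    rw [← ENNReal.toReal_add (measure_ne_top _ _) (measure_ne_top _ _),
      measure_add_measure_compl hs, measure_univ, ENNReal.toReal_one]
  have hHs1 : (H s).toReal + (H sᶜ).toReal = 1 := by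
    rw [← ENNReal.toReal_add (measure_ne_top _ _) (measure_ne_top _ _),
      measure_add_measure_compl hs, measure_univ, ENNReal.toReal_one]
  have hmval : m = (M sᶜ).toReal + (H s).toReal := by
    rw [hm, hμdef, Measure.add_apply, Measure.restrict_apply MeasurableSet.univ,
      Measure.restrict_apply MeasurableSet.univ, Set.univ_inter, Set.univ_inter,
      ENNReal.toReal_add (measure_ne_top _ _) (measure_ne_top _ _)]
  have hdval : d = (M s).toReal - (H s).toReal := by
    rw [hmval] at hdm; linarith
  -- bounds involving the total variation distance
  haveI : Nonempty {A : Set X // MeasurableSet A} := ⟨⟨∅, MeasurableSet.empty⟩⟩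
  have hbound : ∀ A : {A : Set X // MeasurableSet A},
      |(M A.1).toReal - (H A.1).toReal| ≤ 1 := by
    intro A
    have h1 : (M A.1).toReal ≤ 1 := by
      have := ENNReal.toReal_mono (by norm_num) (prob_le_one (μ := M) (s := A.1))
      simpa using this
    have h2 : (H A.1).toReal ≤ 1 := by
      have := ENNReal.toReal_mono (by norm_num) (prob_le_one (μ := H) (s := A.1))
      simpa using this
    have h3 : (0:ℝ) ≤ (M A.1).toReal := ENNReal.toReal_nonneg
    have h4 : (0:ℝ) ≤ (H A.1).toReal := ENNReal.toReal_nonneg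
    rw [abs_sub_le_iff]
    constructor <;> linarith
  have hbdd : BddAbove (Set.range fun A : {A : Set X // MeasurableSet A} =>
      |(M A.1).toReal - (H A.1).toReal|) := by
    refine ⟨1, ?_⟩
    rintro x ⟨A, rfl⟩
    exact hbound A
  have hd_le : d ≤ tvDist M H := by
    have h := le_ciSup hbdd ⟨s, hs⟩
    calc d = (M s).toReal - (H s).toReal := hdval
      _ ≤ |(M s).toReal - (H s).toReal| := le_abs_self _
      _ ≤ tvDist M H := h
  have htv1 : tvDist M H ≤ 1 := ciSup_le hbound
  -- decompose the AUROC
  have hdecomp : auroc M H f = auroc M' H' f + auroc M' μ f + auroc μ H' f + auroc μ μ f := by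
    calc auroc M H f = auroc (M' + μ) (H' + μ) f := by rw [hM, hH]
      _ = auroc M' (H' + μ) f + auroc μ (H' + μ) f := AurocAux.S_add_left _ _ _
      _ = (auroc M' H' f + auroc M' μ f) + (auroc μ H' f + auroc μ μ f) := by
          rw [AurocAux.S_add_right M' H' μ, AurocAux.S_add_right μ H' μ]
      _ = auroc M' H' f + auroc M' μ f + auroc μ H' f + auroc μ μ f := by ring
  have h1 : auroc M' H' f ≤ d * d := by
    have := AurocAux.S_le_mul hf M' H'
    rwa [hH'm, ← hd] at this
  have h2 : auroc M' μ f ≤ d * m := by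
    have := AurocAux.S_le_mul hf M' μ
    rwa [← hd, ← hm] at this
  have h3 : auroc μ H' f ≤ m * d := by
    have := AurocAux.S_le_mul hf μ H'
    rwa [hH'm, ← hm] at this
  have h4 : auroc μ μ f = m ^ 2 / 2 := by
    have := AurocAux.S_self hf μ
    rwa [← hm] at this
  set t : ℝ := tvDist M H with ht
  have key : auroc M H f ≤ d * d + d * m + m * d + m ^ 2 / 2 := by
    rw [hdecomp]; linarith
  have hfinal : d * d + d * m + m * d + m ^ 2 / 2 ≤ 1 / 2 + t - t ^ 2 / 2 := by
    nlinarith [mul_nonneg (sub_nonneg.mpr hd_le) (by linarith : (0:ℝ) ≤ 2 - t - d)]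
  linarith
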